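/- Let K be a field, L a finite-dimensional Galois field extension of K, ι a finite index type, and b : ι → L a K-basis of L. Then the L-linear map from the space of functions Gal(L/K) → L to the space of functions ι → L sending c to the function i ↦ Σ_{σ ∈ Gal(L/K)} c(σ) · σ(b(i)) is bijective. (Equivalently, the matrix (σ(b(i)))_{σ ∈ Gal(L/K), i ∈ ι} is invertible; this combines Dedekind's lemma on independence of field automorphisms with the equality |Gal(L/K)| = [L : K].) -/

import Mathlib

/-!
Dedekind's lemma combined with |Gal(L/K)| = [L : K]: for a finite Galois
extension L/K with K-basis b, the matrix (σ(bᵢ)) is invertible.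
-/

open scoped BigOperators

/-- Let `L/K` be a finite Galois extension and `b : ι → L` a
`K`-basis of `L`.  Then the `L`-linear map sending `c : Gal(L/K) → L` to the
function `i ↦ ∑ σ, c σ * σ (b i)` is bijective. -/
theorem galois_matrix_bijective
    (K L : Type*) [Field K] [Field L] [Algebra K L] [FiniteDimensional K L]
    [IsGalois K L] (ι : Type*) [Fintype ι] (b : Module.Basis ι K L) :
    Function.Bijective (fun (c : (L ≃ₐ[K] L) → L) (i : ι) =>
      ∑ σ : L ≃ₐ[K] L, c σ * σ (b i)) := by
  classical
  let F : ((L ≃ₐ[K] L) → L) →ₗ[L] (ι → L) :=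
    { toFun := fun c i => ∑ σ : L ≃ₐ[K] L, c σ * σ (b i)
      map_add' := by
        intro x y; funext i
        simp [add_mul, Finset.sum_add_distrib]
      map_smul' := by
        intro a x; funext i
        simp [Finset.mul_sum, mul_assoc] }
  have hli : LinearIndependent L (fun (f : L ≃ₐ[K] L) => (f : L → L)) :=
    LinearIndependent.comp (ι' := L ≃ₐ[K] L)
      (linearIndependent_monoidHom L L) (fun f => f)
      (fun x y h => by ext; exact DFunLike.ext_iff.1 h _)
  have hinj : Function.Injective F := by
    rw [← LinearMap.ker_eq_bot, LinearMap.ker_eq_bot']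
    intro c hc
    have hT : (∑ σ : L ≃ₐ[K] L, c σ • (σ.toLinearMap : L →ₗ[K] L)) = 0 := by
      apply b.ext
      intro i
      have h1 := congrFun (show F c = 0 from hc) i
      simpa [F, LinearMap.sum_apply, smul_eq_mul] using h1
    have hz : ∀ σ : L ≃ₐ[K] L, c σ = 0 := by
      apply Fintype.linearIndependent_iff.1 hli c
      funext x
      have h2 := LinearMap.ext_iff.1 hT x
      simpa [LinearMap.sum_apply, smul_eq_mul] using h2
    funext σ; exact hz σ
  have hcard : Fintype.card (L ≃ₐ[K] L) = Fintype.card ι := by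
    rw [← Nat.card_eq_fintype_card, IsGalois.card_aut_eq_finrank, Module.finrank_eq_card_basis b]
  have hrank : Module.finrank L ((L ≃ₐ[K] L) → L) = Module.finrank L (ι → L) := by
    simp [Module.finrank_pi, hcard]
  exact ⟨hinj, (LinearMap.injective_iff_surjective_of_finrank_eq_finrank hrank).1 hinj⟩
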